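/- Let p^θ(σ,σ') be a family of strictly positive stochastic matrices on a finite state space, depending smoothly (C³) on a real parameter θ, with μ a strictly positive stationary distribution of p^θ. Then the relative entropy rate admits the second-order expansion H(p^θ | p^{θ+ε}) = (1/2) ε² F(θ) + O(|ε|³) as ε → 0, where the path-space Fisher information is F(θ) = Σ_σ μ(σ) Σ_{σ'} p^θ(σ,σ') (∂_θ log p^θ(σ,σ'))². -/

import Mathlib

open Asymptotics Filter

/-- Bootstrap: if φ(0)=0 and φ' = O(|ε|^n) near 0, then φ = O(|ε|^(n+1)). -/
lemma aux_isBigO_of_deriv {φ φ' : ℝ → ℝ} {n : ℕ} {δ : ℝ} (hδ : 0 < δ)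
    (hd : ∀ x ∈ Metric.ball (0:ℝ) δ, HasDerivAt φ (φ' x) x)
    (h0 : φ 0 = 0)
    (hO : φ' =O[nhds 0] fun ε => |ε| ^ n) :
    φ =O[nhds 0] fun ε => |ε| ^ (n+1) := by
  obtain ⟨C, hC0, hC⟩ := hO.exists_nonneg
  rw [isBigOWith_iff] at hC
  rw [Metric.eventually_nhds_iff] at hC
  obtain ⟨r, hr0, hr⟩ := hC
  rw [isBigO_iff]
  refine ⟨C, ?_⟩
  rw [Metric.eventually_nhds_iff]
  refine ⟨min r δ, lt_min hr0 hδ, fun {ε} hε => ?_⟩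
  simp only [Real.dist_eq, sub_zero] at hε
  have hεr : |ε| < r := lt_of_lt_of_le hε (min_le_left _ _)
  have hεδ : |ε| < δ := lt_of_lt_of_le hε (min_le_right _ _)
  have key : ‖φ ε - φ 0‖ ≤ (C * |ε| ^ n) * ‖ε - 0‖ := by
    apply Convex.norm_image_sub_le_of_norm_hasDerivWithin_le
      (f' := φ') (s := Metric.closedBall (0:ℝ) |ε|)
    · intro x hx
      have hx' : x ∈ Metric.ball (0:ℝ) δ := by
        simp only [Metric.mem_closedBall, Real.dist_eq, sub_zero] at hx
        simp only [Metric.mem_ball, Real.dist_eq, sub_zero]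
        exact lt_of_le_of_lt hx hεδ
      exact (hd x hx').hasDerivWithinAt
    · intro x hx
      simp only [Metric.mem_closedBall, Real.dist_eq, sub_zero] at hx
      have hxr : dist x 0 < r := by
        simp only [Real.dist_eq, sub_zero]
        exact lt_of_le_of_lt hx hεr
      have := hr hxr
      calc ‖φ' x‖ ≤ C * ‖|x| ^ n‖ := this
        _ ≤ C * |ε| ^ n := by
            rw [Real.norm_eq_abs, abs_pow, abs_abs]
            exact mul_le_mul_of_nonneg_left (pow_le_pow_left₀ (abs_nonneg x) hx n) hC0
    · exact convex_closedBall _ _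
    · simp
    · simp [abs_nonneg]
  rw [h0, sub_zero] at key
  calc ‖φ ε‖ ≤ (C * |ε| ^ n) * ‖ε - 0‖ := key
    _ = C * ‖|ε| ^ (n+1)‖ := by
        rw [Real.norm_eq_abs, Real.norm_eq_abs, sub_zero, abs_pow, abs_abs, pow_succ]
        ring
open Asymptotics Filter

/-- Second-order Taylor remainder of a C³ function on an open set is O(|ε|³). -/
lemma aux_taylor2 {g : ℝ → ℝ} {I : Set ℝ} (hI : IsOpen I) {θ : ℝ} (hθ : θ ∈ I)
    (hg : ContDiffOn ℝ 3 g I) :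
    (fun ε => g (θ+ε) - g θ - ε * deriv g θ - ε^2/2 * deriv (deriv g) θ)
      =O[nhds 0] fun ε => |ε|^3 := by
  obtain ⟨δ, hδ0, hδ⟩ := Metric.isOpen_iff.1 hI θ hθ
  have hmem : ∀ ε : ℝ, ε ∈ Metric.ball (0:ℝ) δ → θ + ε ∈ I := by
    intro ε hε
    apply hδ
    simp only [Metric.mem_ball, Real.dist_eq] at hε ⊢
    simpa using hε
  set g1 := deriv g with hg1def
  set g2 := deriv g1 with hg2def
  have hg1 : ContDiffOn ℝ 2 g1 I := hg.deriv_of_isOpen hI (by norm_num)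
  have hg2 : ContDiffOn ℝ 1 g2 I := hg1.deriv_of_isOpen hI (by norm_num)
  have hgd : ∀ x ∈ I, HasDerivAt g (g1 x) x := fun x hx =>
    (((hg.differentiableOn (by norm_num)) x hx).differentiableAt (hI.mem_nhds hx)).hasDerivAt
  have hg1d : ∀ x ∈ I, HasDerivAt g1 (g2 x) x := fun x hx =>
    (((hg1.differentiableOn (by norm_num)) x hx).differentiableAt (hI.mem_nhds hx)).hasDerivAt
  have hg2d : DifferentiableAt ℝ g2 θ :=
    ((hg2.differentiableOn (by norm_num)) θ hθ).differentiableAt (hI.mem_nhds hθ)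
  -- level 2: g2(θ+ε) - g2 θ = O(|ε|)
  have h2 : (fun ε => g2 (θ+ε) - g2 θ) =O[nhds 0] fun ε => |ε|^1 := by
    have := hg2d.hasDerivAt.isBigO_sub
    have htend : Filter.Tendsto (fun ε : ℝ => θ + ε) (nhds 0) (nhds θ) := by
      have : Filter.Tendsto (fun ε : ℝ => θ + ε) (nhds 0) (nhds (θ + 0)) :=
        (continuous_const.add continuous_id).tendsto 0
      simpa using this
    have h' := this.comp_tendsto htend
    have h'' : (fun ε : ℝ => g2 (θ+ε) - g2 θ) =O[nhds 0] fun ε : ℝ => ε := by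
      have he : ((fun x' => g2 x' - g2 θ) ∘ fun ε => θ + ε) = fun ε : ℝ => g2 (θ+ε) - g2 θ := rfl
      have he2 : ((fun x' => x' - θ) ∘ fun ε : ℝ => θ + ε) = fun ε : ℝ => ε := by
        funext ε; simp [Function.comp]
      rw [he, he2] at h'
      exact h'
    calc (fun ε : ℝ => g2 (θ+ε) - g2 θ) =O[nhds 0] fun ε : ℝ => ε := h''
      _ =O[nhds 0] fun ε => |ε|^1 := by
          apply isBigO_of_le
          intro x
          simp [Real.norm_eq_abs, abs_abs]
  -- level 1
  have h1 : (fun ε => g1 (θ+ε) - g1 θ - ε * g2 θ) =O[nhds 0] fun ε => |ε|^2 := by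
    apply aux_isBigO_of_deriv (φ' := fun ε => g2 (θ+ε) - g2 θ) hδ0 _ (by simp) h2
    intro x hx
    have hxI : θ + x ∈ I := hmem x hx
    have hc : HasDerivAt (fun ε : ℝ => g1 (θ+ε)) (g2 (θ+x)) x := by
      have := (hg1d (θ+x) hxI).comp x ((hasDerivAt_id x).const_add θ)
      simpa [Function.comp_def] using this
    have := (hc.sub_const (g1 θ)).fun_sub ((hasDerivAt_id x).mul_const (g2 θ))
    simpa using this
  -- level 0
  have h0 : (fun ε => g (θ+ε) - g θ - ε * g1 θ - ε^2/2 * g2 θ) =O[nhds 0] fun ε => |ε|^3 := by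
    apply aux_isBigO_of_deriv (φ' := fun ε => g1 (θ+ε) - g1 θ - ε * g2 θ) hδ0 _ (by simp) h1
    intro x hx
    have hxI : θ + x ∈ I := hmem x hx
    have hc : HasDerivAt (fun ε : ℝ => g (θ+ε)) (g1 (θ+x)) x := by
      have := (hgd (θ+x) hxI).comp x ((hasDerivAt_id x).const_add θ)
      simpa [Function.comp_def] using this
    have hsq : HasDerivAt (fun ε : ℝ => ε^2/2 * g2 θ) (x * g2 θ) x := by
      have := ((hasDerivAt_pow 2 x).div_const 2).mul_const (g2 θ)
      refine this.congr_deriv ?_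
      norm_num
    have := ((hc.sub_const (g θ)).fun_sub ((hasDerivAt_id x).mul_const (g1 θ))).fun_sub hsq
    simpa using this
  exact h0
open Asymptotics Filter

theorem stmt_3 {E : Type*} [Fintype E]
    (I : Set ℝ) (hI : IsOpen I) (θ : ℝ) (hθ : θ ∈ I)
    (p : ℝ → E → E → ℝ) (μ : E → ℝ)
    (hp : ∀ t ∈ I, ∀ σ σ', 0 < p t σ σ')
    (hprow : ∀ t ∈ I, ∀ σ, ∑ σ', p t σ σ' = 1)
    (hsmooth : ∀ σ σ', ContDiffOn ℝ 3 (fun t => p t σ σ') I)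
    (hμpos : ∀ σ, 0 < μ σ) (hμ1 : ∑ σ, μ σ = 1)
    (hμstat : ∀ σ', ∑ σ, μ σ * p θ σ σ' = μ σ') :
    (fun ε : ℝ =>
        (∑ σ, μ σ * ∑ σ', p θ σ σ' * Real.log (p θ σ σ' / p (θ + ε) σ σ'))
          - (1 / 2) * ε ^ 2 *
            (∑ σ, μ σ * ∑ σ', p θ σ σ' *
              (deriv (fun t => Real.log (p t σ σ')) θ) ^ 2))
      =O[nhds 0] fun ε : ℝ => |ε| ^ 3 := by
  classical
  obtain ⟨δ, hδ0, hδ⟩ := Metric.isOpen_iff.1 hI θ hθ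
  have hmem : ∀ ε : ℝ, |ε| < δ → θ + ε ∈ I := by
    intro ε hε
    apply hδ
    simp only [Metric.mem_ball, Real.dist_eq]
    simpa using hε
  -- abbreviations
  set d1 : E → E → ℝ := fun σ σ' => deriv (fun t => Real.log (p t σ σ')) θ with hd1def
  set d2 : E → E → ℝ := fun σ σ' => deriv (deriv (fun t => Real.log (p t σ σ'))) θ with hd2def
  set q1 : E → E → ℝ → ℝ := fun σ σ' => deriv (fun t => p t σ σ') with hq1def
  set q2 : E → E → ℝ → ℝ := fun σ σ' => deriv (q1 σ σ') with hq2def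
  -- basic differentiability facts
  have hQ1 : ∀ σ σ', ∀ x ∈ I, HasDerivAt (fun t => p t σ σ') (q1 σ σ' x) x := by
    intro σ σ' x hx
    exact ((((hsmooth σ σ').differentiableOn (by norm_num)) x hx).differentiableAt
      (hI.mem_nhds hx)).hasDerivAt
  have hq1C2 : ∀ σ σ', ContDiffOn ℝ 2 (q1 σ σ') I := fun σ σ' =>
    (hsmooth σ σ').deriv_of_isOpen hI (by norm_num)
  have hQ2 : ∀ σ σ', ∀ x ∈ I, HasDerivAt (q1 σ σ') (q2 σ σ' x) x := by
    intro σ σ' x hx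
    exact ((((hq1C2 σ σ').differentiableOn (by norm_num)) x hx).differentiableAt
      (hI.mem_nhds hx)).hasDerivAt
  -- sums of first derivatives vanish on I
  have sum1 : ∀ σ, ∀ x ∈ I, ∑ σ', q1 σ σ' x = 0 := by
    intro σ x hx
    have hsum : HasDerivAt (fun t => ∑ σ', p t σ σ') (∑ σ', q1 σ σ' x) x :=
      HasDerivAt.fun_sum fun σ' _ => hQ1 σ σ' x hx
    have hconst : (fun t => ∑ σ', p t σ σ') =ᶠ[nhds x] fun _ => (1:ℝ) := by
      filter_upwards [hI.mem_nhds hx] with t ht using hprow t ht σ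
    have := hconst.deriv_eq
    rw [hsum.deriv, deriv_const] at this
    exact this
  -- sums of second derivatives vanish at θ
  have sum2 : ∀ σ, ∑ σ', q2 σ σ' θ = 0 := by
    intro σ
    have hsum : HasDerivAt (fun t => ∑ σ', q1 σ σ' t) (∑ σ', q2 σ σ' θ) θ :=
      HasDerivAt.fun_sum fun σ' _ => hQ2 σ σ' θ hθ
    have hconst : (fun t => ∑ σ', q1 σ σ' t) =ᶠ[nhds θ] fun _ => (0:ℝ) := by
      filter_upwards [hI.mem_nhds hθ] with t ht using sum1 σ t ht
    have := hconst.deriv_eq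
    rw [hsum.deriv, deriv_const] at this
    exact this
  -- d1 = q1/p
  have hd1 : ∀ σ σ', ∀ x ∈ I, deriv (fun t => Real.log (p t σ σ')) x = q1 σ σ' x / p x σ σ' := by
    intro σ σ' x hx
    exact ((hQ1 σ σ' x hx).log (hp x hx σ σ').ne').deriv
  -- d2 formula at θ
  have hd2 : ∀ σ σ', d2 σ σ' =
      (q2 σ σ' θ * p θ σ σ' - q1 σ σ' θ * q1 σ σ' θ) / (p θ σ σ') ^ 2 := by
    intro σ σ'
    have hev : deriv (fun t => Real.log (p t σ σ')) =ᶠ[nhds θ]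
        fun x => q1 σ σ' x / p x σ σ' := by
      filter_upwards [hI.mem_nhds hθ] with x hx using hd1 σ σ' x hx
    have hdiv : HasDerivAt (fun x => q1 σ σ' x / p x σ σ')
        ((q2 σ σ' θ * p θ σ σ' - q1 σ σ' θ * q1 σ σ' θ) / (p θ σ σ') ^ 2) θ :=
      (hQ2 σ σ' θ hθ).div (hQ1 σ σ' θ hθ) (hp θ hθ σ σ').ne'
    rw [hd2def]
    simp only
    rw [hev.deriv_eq, hdiv.deriv]
  -- identity S1
  have S1 : ∀ σ, ∑ σ', p θ σ σ' * d1 σ σ' = 0 := by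
    intro σ
    have : ∀ σ', p θ σ σ' * d1 σ σ' = q1 σ σ' θ := by
      intro σ'
      rw [hd1def]
      simp only
      rw [hd1 σ σ' θ hθ, mul_div_cancel₀ _ (hp θ hθ σ σ').ne']
    simp only [this]
    exact sum1 σ θ hθ
  -- identity S2
  have S2 : ∀ σ, ∑ σ', p θ σ σ' * d2 σ σ' = -∑ σ', p θ σ σ' * (d1 σ σ') ^ 2 := by
    intro σ
    have key : ∀ σ', p θ σ σ' * d2 σ σ' = q2 σ σ' θ - p θ σ σ' * (d1 σ σ') ^ 2 := by
      intro σ'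
      rw [hd2 σ σ']
      have h1 : d1 σ σ' = q1 σ σ' θ / p θ σ σ' := by
        rw [hd1def]; simp only; exact hd1 σ σ' θ hθ
      rw [h1]
      have hne : p θ σ σ' ≠ 0 := (hp θ hθ σ σ').ne'
      field_simp
    simp only [key, Finset.sum_sub_distrib, sum2 σ]
    ring
  -- remainder estimates
  have hR : ∀ σ σ', (fun ε => Real.log (p (θ+ε) σ σ') - Real.log (p θ σ σ')
      - ε * d1 σ σ' - ε^2/2 * d2 σ σ') =O[nhds 0] fun ε => |ε|^3 := by
    intro σ σ'
    have hgC3 : ContDiffOn ℝ 3 (fun t => Real.log (p t σ σ')) I :=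
      (hsmooth σ σ').log fun x hx => (hp x hx σ σ').ne'
    exact aux_taylor2 hI hθ hgC3
  -- the bound for the sum
  have hB : (fun ε : ℝ => -∑ σ, μ σ * ∑ σ', p θ σ σ' *
      (Real.log (p (θ+ε) σ σ') - Real.log (p θ σ σ') - ε * d1 σ σ' - ε^2/2 * d2 σ σ'))
      =O[nhds 0] fun ε => |ε|^3 := by
    apply IsBigO.neg_left
    apply IsBigO.fun_sum
    intro σ _
    apply IsBigO.const_mul_left
    apply IsBigO.fun_sum
    intro σ' _
    exact (hR σ σ').const_mul_left _
  -- eventual equality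
  apply hB.congr'
  · filter_upwards [Metric.ball_mem_nhds (0:ℝ) hδ0] with ε hε
    simp only [Metric.mem_ball, Real.dist_eq, sub_zero] at hε
    have hεI : θ + ε ∈ I := hmem ε hε
    have inner_eq : ∀ σ, ∑ σ', p θ σ σ' * Real.log (p θ σ σ' / p (θ + ε) σ σ')
        = -(∑ σ', p θ σ σ' *
            (Real.log (p (θ+ε) σ σ') - Real.log (p θ σ σ') - ε * d1 σ σ' - ε^2/2 * d2 σ σ'))
          + ε^2/2 * ∑ σ', p θ σ σ' * (d1 σ σ') ^ 2 := by
      intro σ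
      have step : ∀ σ', p θ σ σ' * Real.log (p θ σ σ' / p (θ + ε) σ σ')
          = -(p θ σ σ' *
              (Real.log (p (θ+ε) σ σ') - Real.log (p θ σ σ') - ε * d1 σ σ' - ε^2/2 * d2 σ σ'))
            - ε * (p θ σ σ' * d1 σ σ') - ε^2/2 * (p θ σ σ' * d2 σ σ') := by
        intro σ'
        rw [Real.log_div (hp θ hθ σ σ').ne' (hp (θ+ε) hεI σ σ').ne']
        ring
      rw [Finset.sum_congr rfl fun σ' _ => step σ']
      rw [Finset.sum_sub_distrib, Finset.sum_sub_distrib, ← Finset.mul_sum, ← Finset.mul_sum,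
        S1 σ, S2 σ, Finset.sum_neg_distrib]
      ring
    have outer : ∀ σ, μ σ * (∑ σ', p θ σ σ' * Real.log (p θ σ σ' / p (θ + ε) σ σ'))
        = -(μ σ * ∑ σ', p θ σ σ' *
            (Real.log (p (θ+ε) σ σ') - Real.log (p θ σ σ') - ε * d1 σ σ' - ε^2/2 * d2 σ σ'))
          + (1/2) * ε^2 * (μ σ * ∑ σ', p θ σ σ' * (d1 σ σ') ^ 2) := by
      intro σ
      rw [inner_eq σ]
      ring
    rw [Finset.sum_congr rfl fun σ _ => outer σ]
    rw [Finset.sum_add_distrib, ← Finset.mul_sum, Finset.sum_neg_distrib]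
    ring
  · exact EventuallyEq.rfl
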